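/- Let k be a commutative ring, A a commutative k-algebra, and f_1, ..., f_r elements of A. Let P = k[t_1, ..., t_r] be the polynomial ring, and let B = A[t_1, ..., t_r]/(1 + t_1·f_1 + ⋯ + t_r·f_r), regarded as a P-algebra via the variables t_i. Then the module of relative Kähler differentials Ω_{B/P} is isomorphic as a B-module to the quotient of Ω_{A/k} ⊗_A B by the B-submodule generated by the single element Σ_{i=1}^{r} t_i·(df_i ⊗ 1). -/

import Mathlib

open TensorProduct

private lemma aux_mem (R S B' : Type*) [CommRing R] [CommRing S] [Algebra R S]
    [CommRing B'] [Algebra R B'] [Algebra S B'] [IsScalarTower R S B']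
    (g s : S) (hg : algebraMap S B' g = 0) :
    (1 : B') ⊗ₜ[S] (KaehlerDifferential.D R S (s * g)) ∈
      Submodule.span B' {(1 : B') ⊗ₜ[S] (KaehlerDifferential.D R S g)} := by
  rw [Derivation.leibniz, tmul_add, ← smul_tmul,
    ← smul_tmul g (1 : B') (KaehlerDifferential.D R S s),
    Algebra.smul_def g, mul_one, hg, zero_tmul, add_zero,
    Algebra.smul_def s, mul_one]
  have hmem := Submodule.smul_mem
    (Submodule.span B' {(1 : B') ⊗ₜ[S] (KaehlerDifferential.D R S g)})
    ((algebraMap S B') s) (Submodule.subset_span rfl)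
  rwa [smul_tmul', smul_eq_mul, mul_one] at hmem

private lemma aux_ker (R S B' : Type*) [CommRing R] [CommRing S] [Algebra R S]
    [CommRing B'] [Algebra R B'] [Algebra S B'] [IsScalarTower R S B']
    (g : S) (hg : algebraMap S B' g = 0) :
    (KaehlerDifferential.mapBaseChange R S B')
      ((1 : B') ⊗ₜ[S] (KaehlerDifferential.D R S g)) = 0 := by
  rw [KaehlerDifferential.mapBaseChange_tmul, one_smul, KaehlerDifferential.map_D, hg,
    map_zero]


set_option maxHeartbeats 1000000 in
set_option synthInstance.maxHeartbeats 400000 in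
/-- The key computation in the proof of the Bertini-type Theorem 2.1: for a
commutative `k`-algebra `A`, elements `f 1, ..., f r ∈ A`,
`P = k[t 1, ..., t r]` and `B = A[t 1, ..., t r]/(1 + t 1·f 1 + ⋯ + t r·f r)`
(a `P`-algebra via the variables `t i`), the module of relative Kähler
differentials `Ω[B⁄P]` is isomorphic, as a `B`-module, to the quotient of
`Ω[A⁄k] ⊗[A] B` (written here as the base change `B ⊗[A] Ω[A⁄k]`) by the
`B`-submodule generated by the single element `Σ i, t i • (1 ⊗ d(f i))`. -/
theorem stmt_5 (k A : Type*) [CommRing k] [CommRing A] [Algebra k A]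
    (r : ℕ) (f : Fin r → A) :
    letI P := MvPolynomial (Fin r) k
    letI I : Ideal (MvPolynomial (Fin r) A) :=
      Ideal.span {1 + ∑ i, MvPolynomial.X i * MvPolynomial.C (f i)}
    letI B := MvPolynomial (Fin r) A ⧸ I
    letI : Algebra P B :=
      ((Ideal.Quotient.mk I).comp
        (MvPolynomial.map (algebraMap k A))).toAlgebra
    Nonempty (Ω[B⁄P] ≃ₗ[B]
      (B ⊗[A] Ω[A⁄k] ⧸
        Submodule.span B
          {∑ i, Ideal.Quotient.mk I (MvPolynomial.X i) •
            ((1 : B) ⊗ₜ[A] (KaehlerDifferential.D k A) (f i))})) := by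
  letI S' := MvPolynomial (Fin r) A
  letI P := MvPolynomial (Fin r) k
  letI : Algebra P S' := (MvPolynomial.map (algebraMap k A)).toAlgebra
  haveI : IsScalarTower k P S' := IsScalarTower.of_algebraMap_eq fun x => by
    rw [MvPolynomial.algebraMap_apply, RingHom.algebraMap_toAlgebra,
      MvPolynomial.algebraMap_eq, MvPolynomial.map_C]
  haveI : SMulCommClass A P S' := ⟨fun a p s => by
    simp only [Algebra.smul_def, mul_left_comm]⟩
  haveI : SMulCommClass P A S' := SMulCommClass.symm _ _ _
  -- the comparison map `S' ⊗[A] Ω[A⁄k] → Ω[S'⁄P]` is bijective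
  have key : Function.Bijective ((KaehlerDifferential.map k P A S').liftBaseChange S' :
      S' ⊗[A] Ω[A⁄k] →ₗ[S'] Ω[S'⁄P]) := by
    haveI hAS : Algebra.IsPushout k A P S' := by
      constructor
      let e : A ⊗[k] P ≃ₗ[A] S' := (MvPolynomial.algebraTensorAlgEquiv k A).toLinearEquiv
      have he : (IsScalarTower.toAlgHom k P S').toLinearMap
          = (e.toLinearMap.restrictScalars k) ∘ₗ (TensorProduct.mk k A P 1) := by
        apply LinearMap.ext; intro p
        simp only [AlgHom.toLinearMap_apply, IsScalarTower.coe_toAlgHom', LinearMap.coe_comp,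
          LinearMap.coe_restrictScalars, Function.comp_apply, mk_apply, LinearEquiv.coe_coe, e,
          AlgEquiv.toLinearEquiv_apply]
        rw [MvPolynomial.algebraTensorAlgEquiv_tmul, one_smul]
        rfl
      rw [he]
      exact (TensorProduct.isBaseChange k P A).comp (IsBaseChange.ofEquiv e)
    haveI : Algebra.IsPushout k P A S' := hAS.symm
    set φ : S' ⊗[A] Ω[A⁄k] →ₗ[S'] Ω[S'⁄P] :=
      (KaehlerDifferential.map k P A S').liftBaseChange S' with hφ
    let g0 := KaehlerDifferential.tensorKaehlerEquivBase k P A S'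
    let j : Ω[A⁄k] →ₗ[k] S' ⊗[A] Ω[A⁄k] :=
      ((TensorProduct.mk A S' (Ω[A⁄k])) 1).restrictScalars k
    let h0 : P ⊗[k] Ω[A⁄k] →ₗ[P] S' ⊗[A] Ω[A⁄k] := j.liftBaseChange P
    have hsmul : ∀ (q : P) (x : S' ⊗[A] Ω[A⁄k]), q • x
        = ((MvPolynomial.map (algebraMap k A)) q : S') • x := fun q x => by
      rw [← algebraMap_smul (R := P) S' q x]; rfl
    have hcomp : ∀ x, φ (h0 x) = g0 x := by
      intro x
      induction x with
      | zero => rw [map_zero, map_zero, map_zero]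
      | add a b ha hb => rw [map_add, map_add, ha, hb, map_add]
      | tmul p ω =>
        have h1 : h0 (p ⊗ₜ ω) = ((algebraMap P S') p) ⊗ₜ[A] ω := by
          rw [LinearMap.liftBaseChange_tmul]
          show p • ((1:S') ⊗ₜ[A] ω) = _
          rw [smul_tmul', Algebra.smul_def, mul_one]
        rw [h1, hφ, LinearMap.liftBaseChange_tmul]
        rw [KaehlerDifferential.tensorKaehlerEquivBase_tmul, algebraMap_smul]
    have h0surj : Function.Surjective h0 := by
      intro x
      induction x with
      | zero => exact ⟨0, map_zero _⟩
      | add a b ha hb =>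
        obtain ⟨y, rfl⟩ := ha; obtain ⟨z, rfl⟩ := hb; exact ⟨y + z, map_add _ _ _⟩
      | tmul s ω =>
        induction s using MvPolynomial.induction_on with
        | C a =>
          refine ⟨1 ⊗ₜ (a • ω), ?_⟩
          have h2 : h0 (1 ⊗ₜ (a • ω)) = (1:S') ⊗ₜ[A] (a • ω) := by
            rw [LinearMap.liftBaseChange_tmul, one_smul]; rfl
          rw [h2, ← smul_tmul, Algebra.smul_def, mul_one]
          rfl
        | add p q hp hq =>
          obtain ⟨y, hy⟩ := hp; obtain ⟨z, hz⟩ := hq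
          exact ⟨y + z, by rw [map_add, hy, hz, add_tmul]⟩
        | mul_X p i hp =>
          obtain ⟨y, hy⟩ := hp
          refine ⟨(MvPolynomial.X i : P) • y, ?_⟩
          rw [map_smul, hy, hsmul, smul_tmul', smul_eq_mul, MvPolynomial.map_X, mul_comm]
    constructor
    · intro a b hab
      obtain ⟨y, rfl⟩ := h0surj a
      obtain ⟨z, rfl⟩ := h0surj b
      rw [hcomp, hcomp] at hab
      rw [g0.injective hab]
    · intro z
      obtain ⟨y, hy⟩ := g0.surjective z
      exact ⟨h0 y, by rw [hcomp, hy]⟩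
  let ψ : S' ⊗[A] Ω[A⁄k] ≃ₗ[S'] Ω[S'⁄P] := LinearEquiv.ofBijective _ key
  have hψ : ∀ x, ψ x = (KaehlerDifferential.map k P A S').liftBaseChange S' x := fun _ => rfl
  -- now the quotient ring
  let g1 : S' := 1 + ∑ i, MvPolynomial.X i * MvPolynomial.C (f i)
  letI I : Ideal S' := Ideal.span {g1}
  letI B := S' ⧸ I
  letI : Algebra P B :=
    ((Ideal.Quotient.mk I).comp (MvPolynomial.map (algebraMap k A))).toAlgebra
  have htow : algebraMap P B = (algebraMap S' B).comp (algebraMap P S') := by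
    rw [Ideal.Quotient.algebraMap_eq]; rfl
  haveI := IsScalarTower.of_algebraMap_eq' htow
  have hsB : Function.Surjective (algebraMap S' B) := by
    rw [Ideal.Quotient.algebraMap_eq]; exact Ideal.Quotient.mk_surjective
  have hmk : algebraMap S' B = (Ideal.Quotient.mk I : S' →+* B) :=
    Ideal.Quotient.algebraMap_eq I
  have hgI : (Ideal.Quotient.mk I) g1 = 0 := by
    rw [Ideal.Quotient.eq_zero_iff_mem]; exact Ideal.subset_span rfl
  have hker : LinearMap.ker (KaehlerDifferential.mapBaseChange P S' B)
      = Submodule.span B {(1 : B) ⊗ₜ[S'] (KaehlerDifferential.D P S' g1)} := by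
    apply le_antisymm
    · intro x hx
      have hx' : x ∈ LinearMap.range (KaehlerDifferential.kerCotangentToTensor P S' B) := by
        rw [KaehlerDifferential.range_kerCotangentToTensor P S' B hsB]; exact hx
      obtain ⟨y, rfl⟩ := hx'
      obtain ⟨⟨w, hw⟩, rfl⟩ := Ideal.toCotangent_surjective _ y
      rw [KaehlerDifferential.kerCotangentToTensor_toCotangent]
      have hwI : w ∈ I := by
        rwa [RingHom.mem_ker, Ideal.Quotient.algebraMap_eq, ← RingHom.mem_ker,
          Ideal.mk_ker] at hw
      obtain ⟨s, rfl⟩ := Ideal.mem_span_singleton'.mp hwI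
      exact aux_mem P S' B g1 s (by rw [Ideal.Quotient.algebraMap_eq]; exact hgI)
    · rw [Submodule.span_le, Set.singleton_subset_iff]
      show (1 : B) ⊗ₜ[S'] (KaehlerDifferential.D P S' g1)
        ∈ LinearMap.ker (KaehlerDifferential.mapBaseChange P S' B)
      rw [LinearMap.mem_ker]
      exact aux_ker P S' B g1 (by rw [Ideal.Quotient.algebraMap_eq]; exact hgI)
  -- the composite isomorphism on coefficients
  let Φ : (B ⊗[S'] Ω[S'⁄P]) ≃ₗ[B] B ⊗[A] Ω[A⁄k] :=
    (TensorProduct.AlgebraTensorModule.congr (LinearEquiv.refl B B) ψ.symm).trans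
      (TensorProduct.AlgebraTensorModule.cancelBaseChange A S' B B (Ω[A⁄k]))
  -- image of the generator
  have hXalg : ∀ i, (MvPolynomial.X i : S') = algebraMap P S' (MvPolynomial.X i) :=
    fun i => (MvPolynomial.map_X _ i).symm
  have hD : KaehlerDifferential.D P S' g1
      = ∑ i, (MvPolynomial.X i : S') • KaehlerDifferential.D P S' (MvPolynomial.C (f i)) := by
    show KaehlerDifferential.D P S' (1 + ∑ i, MvPolynomial.X i * MvPolynomial.C (f i)) = _
    rw [map_add, Derivation.map_one_eq_zero, zero_add, map_sum]
    refine Finset.sum_congr rfl fun i _ => ?_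
    rw [Derivation.leibniz, hXalg i, Derivation.map_algebraMap, smul_zero, add_zero,
      ← hXalg i]
  have hψD : ψ.symm (KaehlerDifferential.D P S' g1)
      = ∑ i, (MvPolynomial.X i : S') ⊗ₜ[A] (KaehlerDifferential.D k A (f i)) := by
    rw [LinearEquiv.symm_apply_eq, map_sum, hD]
    refine Finset.sum_congr rfl fun i _ => ?_
    rw [hψ, LinearMap.liftBaseChange_tmul, KaehlerDifferential.map_D]
    rfl
  have hΦg : Φ ((1 : B) ⊗ₜ[S'] (KaehlerDifferential.D P S' g1))
      = ∑ i, Ideal.Quotient.mk I (MvPolynomial.X i) •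
          ((1 : B) ⊗ₜ[A] (KaehlerDifferential.D k A) (f i)) := by
    show (TensorProduct.AlgebraTensorModule.cancelBaseChange A S' B B (Ω[A⁄k]))
      ((TensorProduct.AlgebraTensorModule.congr (LinearEquiv.refl B B) ψ.symm)
        ((1 : B) ⊗ₜ[S'] (KaehlerDifferential.D P S' g1))) = _
    rw [TensorProduct.AlgebraTensorModule.congr_tmul, hψD, LinearEquiv.refl_apply, tmul_sum,
      map_sum]
    refine Finset.sum_congr rfl fun i _ => ?_
    rw [TensorProduct.AlgebraTensorModule.cancelBaseChange_tmul,
      Algebra.smul_def (MvPolynomial.X i : S') (1 : B), mul_one, hmk]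
    rw [smul_tmul', smul_eq_mul, mul_one]
  have hsurj_mbc := KaehlerDifferential.mapBaseChange_surjective P S' B hsB
  have hmap : (LinearMap.ker (KaehlerDifferential.mapBaseChange P S' B)).map
      (Φ : B ⊗[S'] Ω[S'⁄P] →ₗ[B] B ⊗[A] Ω[A⁄k])
      = Submodule.span B
        {∑ i, Ideal.Quotient.mk I (MvPolynomial.X i) •
          ((1 : B) ⊗ₜ[A] (KaehlerDifferential.D k A) (f i))} := by
    rw [hker, Submodule.map_span, Set.image_singleton, LinearEquiv.coe_coe, hΦg]
  exact ⟨(LinearMap.quotKerEquivOfSurjective _ hsurj_mbc).symm.trans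
    (Submodule.Quotient.equiv _ _ Φ hmap)⟩
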